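/- Let T > 0, n ∈ ℕ, p ∈ (1, ∞), and let X = (X_t)_{t∈[0,T]} and Y = (Y_t)_{t∈[0,T]} be real-valued stochastic processes on a probability space (Ω, F, P) such that E V_{n,T}^p(X) < ∞ and E V_{n,T}^p(Y) < ∞. Then E | V_{n,T}^p(X) − V_{n,T}^p(Y) | ≤ p ( E V_{n,T}^p(X − Y) )^{1/p} ( ( E V_{n,T}^p(X) )^{1 − 1/p} + ( E V_{n,T}^p(Y) )^{1 − 1/p} ). -/

import Mathlib

open MeasureTheory Finset
open scoped ENNReal NNReal

/-- The `p`-variation sum of a real-valued stochastic process `X` along the dyadic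
partition `t_i^n = T i 2^{-n}`, `i = 0, …, 2^n`, of `[0,T]`:
`V_{n,T}^p(X)(ω) = ∑_{i=0}^{2^n-1} |X_{t_{i+1}^n}(ω) - X_{t_i^n}(ω)|^p`. -/
noncomputable def dyadicVariation {Ω : Type*} (T p : ℝ) (n : ℕ) (X : ℝ → Ω → ℝ) (ω : Ω) : ℝ :=
  ∑ i ∈ Finset.range (2 ^ n),
    |X (T * ((i : ℝ) + 1) / 2 ^ n) ω - X (T * (i : ℝ) / 2 ^ n) ω| ^ p

private lemma rpow_sub_rpow_le_mvt {p : ℝ} (hp : 1 ≤ p) {a b : ℝ} (hb : 0 ≤ b) (hba : b ≤ a) :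
    a ^ p - b ^ p ≤ p * (a - b) * a ^ (p - 1) := by
  rcases eq_or_lt_of_le hba with rfl | hlt
  · simp
  · obtain ⟨c, hc, hceq⟩ := exists_hasDerivAt_eq_slope (fun x => x ^ p)
      (fun x => p * x ^ (p - 1)) hlt
      (fun x _ => ((Real.hasDerivAt_rpow_const (Or.inr hp)).continuousAt).continuousWithinAt)
      (fun x _ => Real.hasDerivAt_rpow_const (Or.inr hp))
    rw [eq_div_iff (sub_ne_zero.2 hlt.ne')] at hceq
    rw [← hceq]
    have hc0 : (0:ℝ) ≤ c := hb.trans hc.1.le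
    have h1 : c ^ (p - 1) ≤ a ^ (p - 1) :=
      Real.rpow_le_rpow hc0 hc.2.le (by linarith)
    have h2 : (0:ℝ) ≤ a - b := by linarith
    have h3 : (0:ℝ) ≤ p := by linarith
    nlinarith [mul_le_mul_of_nonneg_left h1 (mul_nonneg h3 h2)]

private lemma abs_rpow_sub_le_aux {p : ℝ} (hp : 1 ≤ p) {u v : ℝ} (h : |v| ≤ |u|) :
    |u| ^ p - |v| ^ p ≤ p * |u - v| * (|u| ^ (p - 1) + |v| ^ (p - 1)) := by
  have key := rpow_sub_rpow_le_mvt hp (abs_nonneg v) h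
  have habs : |u| - |v| ≤ |u - v| := abs_sub_abs_le_abs_sub u v
  have e1 : (0:ℝ) ≤ |u| ^ (p - 1) := Real.rpow_nonneg (abs_nonneg u) _
  have e2 : (0:ℝ) ≤ |v| ^ (p - 1) := Real.rpow_nonneg (abs_nonneg v) _
  have hp0 : (0:ℝ) ≤ p := by linarith
  have step1 : p * (|u| - |v|) * |u| ^ (p - 1) ≤ p * |u - v| * |u| ^ (p - 1) :=
    mul_le_mul_of_nonneg_right (mul_le_mul_of_nonneg_left habs hp0) e1
  have step2 : (0:ℝ) ≤ p * |u - v| * |v| ^ (p - 1) :=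
    mul_nonneg (mul_nonneg hp0 (abs_nonneg _)) e2
  nlinarith [key, step1, step2]

private lemma abs_rpow_sub_le {p : ℝ} (hp : 1 ≤ p) (u v : ℝ) :
    |(|u| ^ p - |v| ^ p)| ≤ p * |u - v| * (|u| ^ (p - 1) + |v| ^ (p - 1)) := by
  have hp0 : (0:ℝ) ≤ p := by linarith
  rcases le_total |v| |u| with h | h
  · rw [abs_of_nonneg (sub_nonneg.2 (Real.rpow_le_rpow (abs_nonneg v) h hp0))]
    exact abs_rpow_sub_le_aux hp h
  · calc |(|u| ^ p - |v| ^ p)| = |v| ^ p - |u| ^ p := by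
          rw [abs_sub_comm, abs_of_nonneg (sub_nonneg.2 (Real.rpow_le_rpow (abs_nonneg u) h hp0))]
      _ ≤ p * |v - u| * (|v| ^ (p - 1) + |u| ^ (p - 1)) := abs_rpow_sub_le_aux hp h
      _ = p * |u - v| * (|u| ^ (p - 1) + |v| ^ (p - 1)) := by rw [abs_sub_comm]; ring

private lemma rpow_add_le_two_rpow {p : ℝ} (hp : 0 ≤ p) {x y : ℝ} (hx : 0 ≤ x) (hy : 0 ≤ y) :
    (x + y) ^ p ≤ 2 ^ p * (x ^ p + y ^ p) := by
  have h1 : x + y ≤ 2 * max x y := by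
    rcases le_total x y with h | h
    · simp [max_eq_right h]; linarith
    · simp [max_eq_left h]; linarith
  have h2 : (x + y) ^ p ≤ (2 * max x y) ^ p :=
    Real.rpow_le_rpow (by linarith) h1 hp
  have h3 : (2 * max x y) ^ p = 2 ^ p * (max x y) ^ p :=
    Real.mul_rpow (by norm_num) (le_max_of_le_left hx)
  have h4 : (max x y) ^ p ≤ x ^ p + y ^ p := by
    rcases le_total x y with h | h
    · rw [max_eq_right h]; exact le_add_of_nonneg_left (Real.rpow_nonneg hx _)
    · rw [max_eq_left h]; exact le_add_of_nonneg_right (Real.rpow_nonneg hy _)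
  calc (x + y) ^ p ≤ 2 ^ p * (max x y) ^ p := by rw [← h3]; exact h2
    _ ≤ 2 ^ p * (x ^ p + y ^ p) :=
      mul_le_mul_of_nonneg_left h4 (Real.rpow_nonneg (by norm_num) _)

private lemma memℒp_rpow_of_integrable {Ω : Type*} [MeasurableSpace Ω] {P : Measure Ω}
    {r : ℝ} (hr : 0 < r) {V : Ω → ℝ} (hVm : Measurable V) (hVnn : ∀ ω, 0 ≤ V ω)
    (hV : Integrable V P) : MemLp (fun ω => V ω ^ (1 / r)) (ENNReal.ofReal r) P := by
  have h1 : ENNReal.ofReal r ≠ 0 := by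
    simp [ENNReal.ofReal_eq_zero, not_le, hr]
  have h2 : ENNReal.ofReal r ≠ ∞ := ENNReal.ofReal_ne_top
  have hm : Measurable (fun ω => V ω ^ (1 / r)) :=
    (Real.continuous_rpow_const (by positivity)).measurable.comp hVm
  refine (memLp_norm_rpow_iff (q := ENNReal.ofReal r) hm.aestronglyMeasurable h1 h2).1 ?_
  rw [ENNReal.div_self h1 h2]
  have heq : (fun x => ‖V x ^ (1 / r)‖ ^ (ENNReal.ofReal r).toReal) = V := by
    funext x
    rw [ENNReal.toReal_ofReal hr.le, Real.norm_eq_abs,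
      abs_of_nonneg (Real.rpow_nonneg (hVnn x) _), ← Real.rpow_mul (hVnn x),
      one_div, inv_mul_cancel₀ hr.ne', Real.rpow_one]
  rw [heq]
  exact memLp_one_iff_integrable.2 hV

private theorem abs_integral_sum_rpow_sub_le {Ω : Type*} [MeasurableSpace Ω]
    (P : Measure Ω) [IsProbabilityMeasure P] {p : ℝ} (hp : 1 < p) (N : ℕ)
    (A B : ℕ → Ω → ℝ) (hA : ∀ i, Measurable (A i)) (hB : ∀ i, Measurable (B i))
    (hVA : Integrable (fun ω => ∑ i ∈ Finset.range N, |A i ω| ^ p) P)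
    (hVB : Integrable (fun ω => ∑ i ∈ Finset.range N, |B i ω| ^ p) P) :
    ∫ ω, |(∑ i ∈ Finset.range N, |A i ω| ^ p) - ∑ i ∈ Finset.range N, |B i ω| ^ p| ∂P ≤
      p * (∫ ω, ∑ i ∈ Finset.range N, |A i ω - B i ω| ^ p ∂P) ^ (1 / p) *
        ((∫ ω, ∑ i ∈ Finset.range N, |A i ω| ^ p ∂P) ^ (1 - 1 / p) +
          (∫ ω, ∑ i ∈ Finset.range N, |B i ω| ^ p ∂P) ^ (1 - 1 / p)) := by
  set q : ℝ := p / (p - 1) with hqdef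
  have hpq : p.HolderConjugate q := Real.HolderConjugate.conjExponent hp
  have hp0 : (0:ℝ) < p := hpq.pos
  have hq0 : (0:ℝ) < q := hpq.symm.pos
  have h1q : 1 / q = 1 - 1 / p := by
    have := hpq.inv_add_inv_eq_one
    rw [one_div, one_div]; linarith
  set VA : Ω → ℝ := fun ω => ∑ i ∈ Finset.range N, |A i ω| ^ p with hVAdef
  set VB : Ω → ℝ := fun ω => ∑ i ∈ Finset.range N, |B i ω| ^ p with hVBdef
  set VZ : Ω → ℝ := fun ω => ∑ i ∈ Finset.range N, |A i ω - B i ω| ^ p with hVZdef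
  have hVAnn : ∀ ω, 0 ≤ VA ω := fun ω =>
    Finset.sum_nonneg fun i _ => Real.rpow_nonneg (abs_nonneg _) _
  have hVBnn : ∀ ω, 0 ≤ VB ω := fun ω =>
    Finset.sum_nonneg fun i _ => Real.rpow_nonneg (abs_nonneg _) _
  have hVZnn : ∀ ω, 0 ≤ VZ ω := fun ω =>
    Finset.sum_nonneg fun i _ => Real.rpow_nonneg (abs_nonneg _) _
  have mVA : Measurable VA :=
    Finset.measurable_sum _ fun i _ =>
      (Real.continuous_rpow_const hp0.le).measurable.comp (hA i).abs
  have mVB : Measurable VB :=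
    Finset.measurable_sum _ fun i _ =>
      (Real.continuous_rpow_const hp0.le).measurable.comp (hB i).abs
  have mVZ : Measurable VZ :=
    Finset.measurable_sum _ fun i _ =>
      (Real.continuous_rpow_const hp0.le).measurable.comp ((hA i).sub (hB i)).abs
  -- integrability of VZ
  have hVZ : Integrable VZ P := by
    refine ((hVA.add hVB).const_mul ((2:ℝ) ^ p)).mono' mVZ.aestronglyMeasurable
      (Filter.Eventually.of_forall fun ω => ?_)
    rw [Real.norm_eq_abs, abs_of_nonneg (hVZnn ω)]
    calc VZ ω ≤ ∑ i ∈ Finset.range N, (2:ℝ) ^ p * (|A i ω| ^ p + |B i ω| ^ p) := by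
          refine Finset.sum_le_sum fun i _ => ?_
          calc |A i ω - B i ω| ^ p ≤ (|A i ω| + |B i ω|) ^ p :=
                Real.rpow_le_rpow (abs_nonneg _) (abs_sub _ _) hp0.le
            _ ≤ (2:ℝ) ^ p * (|A i ω| ^ p + |B i ω| ^ p) :=
                rpow_add_le_two_rpow hp0.le (abs_nonneg _) (abs_nonneg _)
      _ = (2:ℝ) ^ p * (VA ω + VB ω) := by
          rw [← Finset.mul_sum, Finset.sum_add_distrib]
  -- ℒ^p / ℒ^q membership of the rpow functions
  have hfm : MemLp (fun ω => VZ ω ^ (1 / p)) (ENNReal.ofReal p) P :=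
    memℒp_rpow_of_integrable hp0 mVZ hVZnn hVZ
  have hgAm : MemLp (fun ω => VA ω ^ (1 / q)) (ENNReal.ofReal q) P :=
    memℒp_rpow_of_integrable hq0 mVA hVAnn hVA
  have hgBm : MemLp (fun ω => VB ω ^ (1 / q)) (ENNReal.ofReal q) P :=
    memℒp_rpow_of_integrable hq0 mVB hVBnn hVB
  -- integrability of the products
  have hone : (1 : ℝ≥0∞) / 1 = 1 / ENNReal.ofReal p + 1 / ENNReal.ofReal q := by
    simpa [one_div] using hpq.inv_add_inv_ennreal.symm
  have hfgA : Integrable (fun ω => VZ ω ^ (1 / p) * VA ω ^ (1 / q)) P := by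
    have := MemLp.smul (μ := P) hgAm hfm (r := 1) (hpqr := ⟨by simpa [one_div] using hone.symm⟩)
    simpa [Pi.smul_apply, smul_eq_mul, Pi.mul_def] using memLp_one_iff_integrable.1 this
  have hfgB : Integrable (fun ω => VZ ω ^ (1 / p) * VB ω ^ (1 / q)) P := by
    have := MemLp.smul (μ := P) hgBm hfm (r := 1) (hpqr := ⟨by simpa [one_div] using hone.symm⟩)
    simpa [Pi.smul_apply, smul_eq_mul, Pi.mul_def] using memLp_one_iff_integrable.1 this
  -- pointwise bound
  have hpoint : ∀ ω, |VA ω - VB ω| ≤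
      p * (VZ ω ^ (1 / p) * VA ω ^ (1 / q) + VZ ω ^ (1 / p) * VB ω ^ (1 / q)) := by
    intro ω
    have hSA : ∑ i ∈ Finset.range N, |A i ω - B i ω| * |A i ω| ^ (p - 1) ≤
        VZ ω ^ (1 / p) * VA ω ^ (1 / q) := by
      have H := Real.inner_le_Lp_mul_Lq_of_nonneg (Finset.range N)
        (f := fun i => |A i ω - B i ω|) (g := fun i => |A i ω| ^ (p - 1)) hpq
        (fun i _ => abs_nonneg _) (fun i _ => Real.rpow_nonneg (abs_nonneg _) _)
      have e2 : ∑ i ∈ Finset.range N, (|A i ω| ^ (p - 1)) ^ q = VA ω :=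
        Finset.sum_congr rfl fun i _ => by
          rw [← Real.rpow_mul (abs_nonneg _), hpq.sub_one_mul_conj]
      rw [e2] at H
      exact H
    have hSB : ∑ i ∈ Finset.range N, |A i ω - B i ω| * |B i ω| ^ (p - 1) ≤
        VZ ω ^ (1 / p) * VB ω ^ (1 / q) := by
      have H := Real.inner_le_Lp_mul_Lq_of_nonneg (Finset.range N)
        (f := fun i => |A i ω - B i ω|) (g := fun i => |B i ω| ^ (p - 1)) hpq
        (fun i _ => abs_nonneg _) (fun i _ => Real.rpow_nonneg (abs_nonneg _) _)
      have e2 : ∑ i ∈ Finset.range N, (|B i ω| ^ (p - 1)) ^ q = VB ω :=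
        Finset.sum_congr rfl fun i _ => by
          rw [← Real.rpow_mul (abs_nonneg _), hpq.sub_one_mul_conj]
      rw [e2] at H
      exact H
    calc |VA ω - VB ω|
        = |∑ i ∈ Finset.range N, (|A i ω| ^ p - |B i ω| ^ p)| := by
          rw [hVAdef, hVBdef, Finset.sum_sub_distrib]
      _ ≤ ∑ i ∈ Finset.range N, |(|A i ω| ^ p - |B i ω| ^ p)| :=
          Finset.abs_sum_le_sum_abs _ _
      _ ≤ ∑ i ∈ Finset.range N,
            p * |A i ω - B i ω| * (|A i ω| ^ (p - 1) + |B i ω| ^ (p - 1)) :=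
          Finset.sum_le_sum fun i _ => abs_rpow_sub_le hp.le _ _
      _ = p * ((∑ i ∈ Finset.range N, |A i ω - B i ω| * |A i ω| ^ (p - 1)) +
            ∑ i ∈ Finset.range N, |A i ω - B i ω| * |B i ω| ^ (p - 1)) := by
          rw [← Finset.sum_add_distrib, Finset.mul_sum]
          exact Finset.sum_congr rfl fun i _ => by ring
      _ ≤ p * (VZ ω ^ (1 / p) * VA ω ^ (1 / q) + VZ ω ^ (1 / p) * VB ω ^ (1 / q)) :=
          mul_le_mul_of_nonneg_left (add_le_add hSA hSB) hp0.le
  -- integral Hölder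
  have hintZ : ∫ ω, (VZ ω ^ (1 / p)) ^ p ∂P = ∫ ω, VZ ω ∂P := by
    refine integral_congr_ae (Filter.Eventually.of_forall fun ω => ?_)
    show (VZ ω ^ (1 / p)) ^ p = VZ ω
    rw [← Real.rpow_mul (hVZnn ω), one_div, inv_mul_cancel₀ hp0.ne', Real.rpow_one]
  have hintA : ∫ ω, (VA ω ^ (1 / q)) ^ q ∂P = ∫ ω, VA ω ∂P := by
    refine integral_congr_ae (Filter.Eventually.of_forall fun ω => ?_)
    show (VA ω ^ (1 / q)) ^ q = VA ω
    rw [← Real.rpow_mul (hVAnn ω), one_div, inv_mul_cancel₀ hq0.ne', Real.rpow_one]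
  have hintB : ∫ ω, (VB ω ^ (1 / q)) ^ q ∂P = ∫ ω, VB ω ∂P := by
    refine integral_congr_ae (Filter.Eventually.of_forall fun ω => ?_)
    show (VB ω ^ (1 / q)) ^ q = VB ω
    rw [← Real.rpow_mul (hVBnn ω), one_div, inv_mul_cancel₀ hq0.ne', Real.rpow_one]
  have HA := integral_mul_le_Lp_mul_Lq_of_nonneg (μ := P) hpq
    (Filter.Eventually.of_forall fun ω => Real.rpow_nonneg (hVZnn ω) _)
    (Filter.Eventually.of_forall fun ω => Real.rpow_nonneg (hVAnn ω) _) hfm hgAm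
  have HB := integral_mul_le_Lp_mul_Lq_of_nonneg (μ := P) hpq
    (Filter.Eventually.of_forall fun ω => Real.rpow_nonneg (hVZnn ω) _)
    (Filter.Eventually.of_forall fun ω => Real.rpow_nonneg (hVBnn ω) _) hfm hgBm
  rw [hintZ, hintA] at HA
  rw [hintZ, hintB] at HB
  calc ∫ ω, |VA ω - VB ω| ∂P
      ≤ ∫ ω, p * (VZ ω ^ (1 / p) * VA ω ^ (1 / q) + VZ ω ^ (1 / p) * VB ω ^ (1 / q)) ∂P :=
        integral_mono ((hVA.sub hVB).abs) ((hfgA.add hfgB).const_mul p) hpoint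
    _ = p * ((∫ ω, VZ ω ^ (1 / p) * VA ω ^ (1 / q) ∂P) +
          ∫ ω, VZ ω ^ (1 / p) * VB ω ^ (1 / q) ∂P) := by
        rw [integral_const_mul, integral_add hfgA hfgB]
    _ ≤ p * ((∫ ω, VZ ω ∂P) ^ (1 / p) * (∫ ω, VA ω ∂P) ^ (1 / q) +
          (∫ ω, VZ ω ∂P) ^ (1 / p) * (∫ ω, VB ω ∂P) ^ (1 / q)) :=
        mul_le_mul_of_nonneg_left (add_le_add HA HB) hp0.le
    _ = p * (∫ ω, VZ ω ∂P) ^ (1 / p) *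
          ((∫ ω, VA ω ∂P) ^ (1 - 1 / p) + (∫ ω, VB ω ∂P) ^ (1 - 1 / p)) := by
        rw [h1q]; ring

/-- If `E V_{n,T}^p(X) < ∞` and `E V_{n,T}^p(Y) < ∞` for some `p ∈ (1,∞)`, then
`E|V_{n,T}^p(X) - V_{n,T}^p(Y)| ≤ p (E V_{n,T}^p(X-Y))^{1/p}
  ((E V_{n,T}^p(X))^{1-1/p} + (E V_{n,T}^p(Y))^{1-1/p})`. -/
theorem abs_expectation_dyadicVariation_sub_le {Ω : Type*} [MeasurableSpace Ω]
    (P : Measure Ω) [IsProbabilityMeasure P]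
    (T p : ℝ) (hT : 0 < T) (n : ℕ) (hp : 1 < p)
    (X Y : ℝ → Ω → ℝ)
    (hXmeas : ∀ t, Measurable (X t)) (hYmeas : ∀ t, Measurable (Y t))
    (hX : Integrable (dyadicVariation T p n X) P)
    (hY : Integrable (dyadicVariation T p n Y) P) :
    ∫ ω, |dyadicVariation T p n X ω - dyadicVariation T p n Y ω| ∂P ≤
      p * (∫ ω, dyadicVariation T p n (fun t ω => X t ω - Y t ω) ω ∂P) ^ (1 / p) *
        ((∫ ω, dyadicVariation T p n X ω ∂P) ^ (1 - 1 / p) +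
          (∫ ω, dyadicVariation T p n Y ω ∂P) ^ (1 - 1 / p)) := by
  set A : ℕ → Ω → ℝ := fun i ω => X (T * ((i : ℝ) + 1) / 2 ^ n) ω - X (T * (i : ℝ) / 2 ^ n) ω
    with hAdef
  set B : ℕ → Ω → ℝ := fun i ω => Y (T * ((i : ℝ) + 1) / 2 ^ n) ω - Y (T * (i : ℝ) / 2 ^ n) ω
    with hBdef
  have hA : ∀ i, Measurable (A i) := fun i => (hXmeas _).sub (hXmeas _)
  have hB : ∀ i, Measurable (B i) := fun i => (hYmeas _).sub (hYmeas _)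
  have key := abs_integral_sum_rpow_sub_le P hp (2 ^ n) A B hA hB hX hY
  have e : ∫ ω, dyadicVariation T p n (fun t ω => X t ω - Y t ω) ω ∂P =
      ∫ ω, ∑ i ∈ Finset.range (2 ^ n), |A i ω - B i ω| ^ p ∂P := by
    refine integral_congr_ae (Filter.Eventually.of_forall fun ω => ?_)
    refine Finset.sum_congr rfl fun i _ => ?_
    rw [hAdef, hBdef]
    simp only
    rw [sub_sub_sub_comm]
  rw [e]
  exact key
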